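/- (Forward recursion for the weights.) In the dual quantization scheme, for every k = 1,…,n and every grid point x_l^k of Γ_k ∪ {x_0^k, x_{N_k+1}^k}: P(X̂^k = x_l^k) = Σ_{j=0}^{N_{k−1}+1} [ (1 − p_k) · λ_l^k(x_j^{k−1}) + p_k · λ_l^k(x_j^{k−1} + α_k) ] · P(X̂^{k−1} = x_j^{k−1}), where λ_l^k(ξ) := P(J_{Γ_k}(ξ, Λ_k) = x_l^k) for ξ ∈ [0, s_k]. -/

import Mathlib

open MeasureTheory ProbabilityTheory

/-- Index `j*(ξ)` of the segment `[x_j, x_{j+1})` of the grid containing `ξ`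
(with default value `N`, corresponding to the closed last segment). -/
noncomputable def jstar (N : ℕ) (x : ℕ → ℝ) (ξ : ℝ) : ℕ :=
  if h : ∃ j, j ≤ N ∧ x j ≤ ξ ∧ ξ < x (j + 1) then h.choose else N

/-- The dual quantization operator `J_Γ(ξ, λ)` associated with the grid
`x 0 ≤ x 1 ≤ … ≤ x (N+1)`. -/
noncomputable def dualQ (N : ℕ) (x : ℕ → ℝ) (ξ lam : ℝ) : ℝ :=
  if x (jstar N x ξ + 1) = x (jstar N x ξ) then ξ
  else if lam < (x (jstar N x ξ + 1) - ξ) / (x (jstar N x ξ + 1) - x (jstar N x ξ)) then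
    x (jstar N x ξ)
  else x (jstar N x ξ + 1)

/-- The dual quantization scheme `X̂⁰ := 0`, `X̂ᵏ⁺¹ := J_{Γₖ}(X̂ᵏ + αₖ Zₖ, Λₖ)`,
where the grid `Γₖ` (used in the step producing `X̂ᵏ⁺¹`) has `Nk k` interior points
given by `x k 1, …, x k (Nk k)`. -/
noncomputable def XhatScheme {Ω : Type*} (Nk : ℕ → ℕ) (x : ℕ → ℕ → ℝ) (α : ℕ → ℝ)
    (Z Λ : ℕ → Ω → ℝ) : ℕ → Ω → ℝ
  | 0 => fun _ => 0
  | k + 1 => fun ω =>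
      dualQ (Nk k) (x k) (XhatScheme Nk x α Z Λ k ω + α k * Z k ω) (Λ k ω)

section helpers

variable {N : ℕ} {x : ℕ → ℝ}

private lemma grid_mono (hm : ∀ j ≤ N, x j < x (j + 1)) :
    ∀ {a b : ℕ}, a ≤ b → b ≤ N + 1 → x a ≤ x b := by
  intro a b hab hb
  induction b with
  | zero => simp [Nat.le_zero.mp hab]
  | succ b ih =>
    rcases Nat.lt_or_ge a (b + 1) with h | h
    · exact le_trans (ih (Nat.lt_succ_iff.mp h) (by omega)) (le_of_lt (hm b (by omega)))
    · have : a = b + 1 := le_antisymm hab h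
      simp [this]

private lemma grid_strict (hm : ∀ j ≤ N, x j < x (j + 1)) {a b : ℕ}
    (hab : a < b) (hb : b ≤ N + 1) : x a < x b := by
  rcases Nat.exists_eq_add_of_lt hab with ⟨c, rfl⟩
  calc x a ≤ x (a + c) := grid_mono hm (by omega) (by omega)
    _ < x (a + c + 1) := hm _ (by omega)

private lemma jstar_le (N : ℕ) (x : ℕ → ℝ) (ξ : ℝ) : jstar N x ξ ≤ N := by
  unfold jstar
  split
  · next h => exact h.choose_spec.1
  · exact le_rfl

private lemma jstar_eq (hm : ∀ j ≤ N, x j < x (j + 1)) {j : ℕ} {ξ : ℝ}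
    (hj : j ≤ N) (h1 : x j ≤ ξ) (h2 : ξ < x (j + 1)) : jstar N x ξ = j := by
  have hex : ∃ j, j ≤ N ∧ x j ≤ ξ ∧ ξ < x (j + 1) := ⟨j, hj, h1, h2⟩
  rw [jstar, dif_pos hex]
  obtain ⟨hj', h1', h2'⟩ := hex.choose_spec
  by_contra hne
  rcases Nat.lt_or_ge hex.choose j with h | h
  · have : x (hex.choose + 1) ≤ x j := grid_mono hm h (by omega)
    linarith
  · have hgt : j < hex.choose := by omega
    have : x (j + 1) ≤ x hex.choose := grid_mono hm hgt (by omega)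
    linarith

private lemma measurableSet_jstar_eq (hm : ∀ j ≤ N, x j < x (j + 1)) {j : ℕ} (hj : j ≤ N) :
    MeasurableSet {ξ : ℝ | jstar N x ξ = j} := by
  classical
  rcases eq_or_lt_of_le hj with hjN | hjN
  · -- j = N
    have hset : {ξ : ℝ | jstar N x ξ = j} =
        Set.Ico (x j) (x (j + 1)) ∪ (⋃ i ∈ Finset.range (N + 1), Set.Ico (x i) (x (i + 1)))ᶜ := by
      ext ξ
      simp only [Set.mem_setOf_eq, Set.mem_union, Set.mem_Ico, Set.mem_compl_iff, Set.mem_iUnion,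
        Finset.mem_range, not_exists, exists_prop, not_and]
      constructor
      · intro hst
        by_cases hex : ∃ i, i ≤ N ∧ x i ≤ ξ ∧ ξ < x (i + 1)
        · left
          have hspec := hex.choose_spec
          have hch : jstar N x ξ = hex.choose := by rw [jstar, dif_pos hex]
          rw [hch] at hst
          rw [← hst]
          exact ⟨hspec.2.1, hspec.2.2⟩
        · right
          intro i hi h1 h2
          exact hex ⟨i, by omega, h1, h2⟩
      · rintro (⟨h1, h2⟩ | hnot)
        · exact jstar_eq hm hj h1 h2
        · have hex : ¬ ∃ i, i ≤ N ∧ x i ≤ ξ ∧ ξ < x (i + 1) := by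
            rintro ⟨i, hi, h1, h2⟩
            exact hnot i (by omega) h1 h2
          rw [jstar, dif_neg hex, hjN]
    rw [hset]
    exact measurableSet_Ico.union
      ((MeasurableSet.biUnion (Finset.range (N + 1)).countable_toSet
        (fun i _ => measurableSet_Ico)).compl)
  · -- j < N
    have hset : {ξ : ℝ | jstar N x ξ = j} = Set.Ico (x j) (x (j + 1)) := by
      ext ξ
      simp only [Set.mem_setOf_eq, Set.mem_Ico]
      constructor
      · intro hst
        by_cases hex : ∃ i, i ≤ N ∧ x i ≤ ξ ∧ ξ < x (i + 1)
        · have hspec := hex.choose_spec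
          have hch : jstar N x ξ = hex.choose := by rw [jstar, dif_pos hex]
          rw [hch] at hst
          rw [← hst]
          exact ⟨hspec.2.1, hspec.2.2⟩
        · rw [jstar, dif_neg hex] at hst
          omega
      · rintro ⟨h1, h2⟩
        exact jstar_eq hm hj h1 h2
    rw [hset]
    exact measurableSet_Ico

private lemma dualQ_eq (hm : ∀ j ≤ N, x j < x (j + 1)) (ξ lam : ℝ) :
    dualQ N x ξ lam =
      if lam < (x (jstar N x ξ + 1) - ξ) / (x (jstar N x ξ + 1) - x (jstar N x ξ)) then
        x (jstar N x ξ)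
      else x (jstar N x ξ + 1) := by
  have hne : x (jstar N x ξ + 1) ≠ x (jstar N x ξ) := ne_of_gt (hm _ (jstar_le N x ξ))
  rw [dualQ, if_neg hne]

private lemma dualQ_mem (hm : ∀ j ≤ N, x j < x (j + 1)) (ξ lam : ℝ) :
    ∃ j < N + 2, dualQ N x ξ lam = x j := by
  rw [dualQ_eq hm]
  have := jstar_le N x ξ
  split
  · exact ⟨jstar N x ξ, by omega, rfl⟩
  · exact ⟨jstar N x ξ + 1, by omega, rfl⟩

private lemma measurable_dualQ (hm : ∀ j ≤ N, x j < x (j + 1)) :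
    Measurable (fun q : ℝ × ℝ => dualQ N x q.1 q.2) := by
  classical
  have hrep : (fun q : ℝ × ℝ => dualQ N x q.1 q.2) = fun q =>
      ∑ j ∈ Finset.range (N + 1), if jstar N x q.1 = j then
        (if q.2 < (x (j + 1) - q.1) / (x (j + 1) - x j) then x j else x (j + 1)) else 0 := by
    funext q
    rw [Finset.sum_ite_eq, if_pos (Finset.mem_range.mpr (by have := jstar_le N x q.1; omega))]
    exact dualQ_eq hm q.1 q.2
  rw [hrep]
  apply Finset.measurable_sum
  intro j hj
  have hjN : j ≤ N := by simpa using Nat.lt_succ_iff.mp (Finset.mem_range.mp hj)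
  have h1 : MeasurableSet {q : ℝ × ℝ | jstar N x q.1 = j} :=
    (measurableSet_jstar_eq hm hjN).preimage measurable_fst
  have h2 : MeasurableSet {q : ℝ × ℝ | q.2 < (x (j + 1) - q.1) / (x (j + 1) - x j)} :=
    measurableSet_lt measurable_snd
      ((measurable_const.sub measurable_fst).div_const _)
  exact Measurable.ite h1 (Measurable.ite h2 measurable_const measurable_const) measurable_const

private lemma measurable_dualQ_right (N : ℕ) (x : ℕ → ℝ) (ξ : ℝ) :
    Measurable (fun lam => dualQ N x ξ lam) := by
  unfold dualQ
  by_cases h : x (jstar N x ξ + 1) = x (jstar N x ξ)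
  · simp only [if_pos h]; exact measurable_const
  · simp only [if_neg h]
    exact Measurable.ite measurableSet_Iio measurable_const measurable_const

end helpers

section scheme

variable {Ω : Type*} [MeasurableSpace Ω]

private noncomputable def Phi (Nk : ℕ → ℕ) (x : ℕ → ℕ → ℝ) (α : ℕ → ℝ) :
    ℕ → (ℕ ⊕ ℕ → ℝ) → ℝ
  | 0 => fun _ => 0
  | k + 1 => fun f =>
      dualQ (Nk k) (x k) (Phi Nk x α k f + α k * f (Sum.inl k)) (f (Sum.inr k))

private lemma Phi_spec (Nk : ℕ → ℕ) (x : ℕ → ℕ → ℝ) (α : ℕ → ℝ) (Z Λ : ℕ → Ω → ℝ) :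
    ∀ k ω, XhatScheme Nk x α Z Λ k ω = Phi Nk x α k (fun i => Sum.elim Z Λ i ω)
  | 0, ω => rfl
  | k + 1, ω => by
    simp only [XhatScheme, Phi, Phi_spec Nk x α Z Λ k ω]
    rfl

private lemma Phi_congr (Nk : ℕ → ℕ) (x : ℕ → ℕ → ℝ) (α : ℕ → ℝ) :
    ∀ k (f g : ℕ ⊕ ℕ → ℝ),
      (∀ j < k, f (Sum.inl j) = g (Sum.inl j) ∧ f (Sum.inr j) = g (Sum.inr j)) →
      Phi Nk x α k f = Phi Nk x α k g
  | 0, f, g, _ => rfl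
  | k + 1, f, g, h => by
    simp only [Phi]
    rw [Phi_congr Nk x α k f g (fun j hj => h j (by omega)),
      (h k (by omega)).1, (h k (by omega)).2]

private lemma measurable_Phi (Nk : ℕ → ℕ) (x : ℕ → ℕ → ℝ) (α : ℕ → ℝ) :
    ∀ k, (∀ j < k, ∀ i ≤ Nk j, x j i < x j (i + 1)) → Measurable (Phi Nk x α k)
  | 0, _ => measurable_const
  | k + 1, hg => by
    have ih := measurable_Phi Nk x α k (fun j hj => hg j (by omega))
    have heq : Phi Nk x α (k + 1) = (fun q : ℝ × ℝ => dualQ (Nk k) (x k) q.1 q.2) ∘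
        (fun f => (Phi Nk x α k f + α k * f (Sum.inl k), f (Sum.inr k))) := rfl
    rw [heq]
    exact (measurable_dualQ (hg k (by omega))).comp
      ((ih.add (measurable_const.mul (measurable_pi_apply _))).prodMk (measurable_pi_apply _))

private lemma measurable_Xhat (Nk : ℕ → ℕ) (x : ℕ → ℕ → ℝ) (α : ℕ → ℝ)
    (Z Λ : ℕ → Ω → ℝ) (hZmeas : ∀ i, Measurable (Z i)) (hΛmeas : ∀ i, Measurable (Λ i)) :
    ∀ k, (∀ j < k, ∀ i ≤ Nk j, x j i < x j (i + 1)) →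
      Measurable (XhatScheme Nk x α Z Λ k)
  | 0, _ => measurable_const
  | k + 1, hg => by
    have ih := measurable_Xhat Nk x α Z Λ hZmeas hΛmeas k (fun j hj => hg j (by omega))
    have heq : XhatScheme Nk x α Z Λ (k + 1) = (fun q : ℝ × ℝ => dualQ (Nk k) (x k) q.1 q.2) ∘
        (fun ω => (XhatScheme Nk x α Z Λ k ω + α k * Z k ω, Λ k ω)) := rfl
    rw [heq]
    exact (measurable_dualQ (hg k (by omega))).comp
      ((ih.add (measurable_const.mul (hZmeas k))).prodMk (hΛmeas k))

private lemma indep_Xhat_pair (P : Measure Ω) [IsProbabilityMeasure P]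
    (Nk : ℕ → ℕ) (x : ℕ → ℕ → ℝ) (α : ℕ → ℝ) (Z Λ : ℕ → Ω → ℝ)
    (hZmeas : ∀ i, Measurable (Z i)) (hΛmeas : ∀ i, Measurable (Λ i))
    (hindep : iIndepFun (m := fun _ : ℕ ⊕ ℕ => (inferInstance : MeasurableSpace ℝ))
      (Sum.elim Z Λ) P)
    (k : ℕ) (hg : ∀ j < k, ∀ i ≤ Nk j, x j i < x j (i + 1)) :
    IndepFun (XhatScheme Nk x α Z Λ k) (fun ω => (Z k ω, Λ k ω)) P := by
  classical
  set S : Finset (ℕ ⊕ ℕ) :=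
    (Finset.range k).image Sum.inl ∪ (Finset.range k).image Sum.inr with hS
  set T : Finset (ℕ ⊕ ℕ) := {Sum.inl k, Sum.inr k} with hT
  have hST : Disjoint S T := by
    rw [Finset.disjoint_left]
    intro a haS haT
    simp only [hS, hT, Finset.mem_union, Finset.mem_image, Finset.mem_range,
      Finset.mem_insert, Finset.mem_singleton] at haS haT
    rcases haT with rfl | rfl <;> rcases haS with ⟨j, hj, hj'⟩ | ⟨j, hj, hj'⟩ <;>
      simp_all <;> omega
  have hmeas : ∀ i, Measurable (Sum.elim Z Λ i) := by
    rintro (i | i)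
    exacts [hZmeas i, hΛmeas i]
  have h := hindep.indepFun_finset S T hST hmeas
  have hinl : Sum.inl k ∈ T := by simp [hT]
  have hinr : Sum.inr k ∈ T := by simp [hT]
  have hφ : Measurable (fun g : S → ℝ =>
      Phi Nk x α k (fun i => if h : i ∈ S then g ⟨i, h⟩ else 0)) := by
    apply (measurable_Phi Nk x α k hg).comp
    apply measurable_pi_lambda
    intro i
    by_cases hi : i ∈ S
    · simp only [dif_pos hi]; exact measurable_pi_apply _
    · simp only [dif_neg hi]; exact measurable_const
  have hψ : Measurable (fun g : T → ℝ => (g ⟨Sum.inl k, hinl⟩, g ⟨Sum.inr k, hinr⟩)) :=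
    (measurable_pi_apply _).prodMk (measurable_pi_apply _)
  have h2 := h.comp hφ hψ
  have e1 : (fun g : S → ℝ =>
        Phi Nk x α k (fun i => if h : i ∈ S then g ⟨i, h⟩ else 0)) ∘
      (fun ω (i : S) => Sum.elim Z Λ i ω) = XhatScheme Nk x α Z Λ k := by
    funext ω
    simp only [Function.comp_apply]
    rw [Phi_spec Nk x α Z Λ k ω]
    apply Phi_congr
    intro j hj
    have h1 : Sum.inl j ∈ S := by
      simp only [hS, Finset.mem_union, Finset.mem_image, Finset.mem_range]
      exact Or.inl ⟨j, hj, rfl⟩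
    have h2 : Sum.inr j ∈ S := by
      simp only [hS, Finset.mem_union, Finset.mem_image, Finset.mem_range]
      exact Or.inr ⟨j, hj, rfl⟩
    constructor
    · simp only [dif_pos h1]
    · simp only [dif_pos h2]
  have e2 : (fun g : T → ℝ => (g ⟨Sum.inl k, hinl⟩, g ⟨Sum.inr k, hinr⟩)) ∘
      (fun ω (i : T) => Sum.elim Z Λ i ω) = fun ω => (Z k ω, Λ k ω) := rfl
  rw [e1, e2] at h2
  exact h2

end scheme

private lemma toReal_comb (a b : ENNReal) (q : ℝ) (hq0 : 0 ≤ q) (hq1 : q ≤ 1)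
    (ha : a ≠ ⊤) (hb : b ≠ ⊤) :
    ((1 - ENNReal.ofReal q) * a + ENNReal.ofReal q * b).toReal =
      (1 - q) * a.toReal + q * b.toReal := by
  rw [ENNReal.toReal_add (ENNReal.mul_ne_top (ENNReal.sub_ne_top ENNReal.one_ne_top) ha)
      (ENNReal.mul_ne_top ENNReal.ofReal_ne_top hb),
    ENNReal.toReal_mul, ENNReal.toReal_mul,
    ENNReal.toReal_sub_of_le (ENNReal.ofReal_le_one.mpr hq1) ENNReal.one_ne_top,
    ENNReal.toReal_one, ENNReal.toReal_ofReal hq0]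

/-- **Forward recursion for the weights.** In the dual quantization scheme, for
every `k = 1,…,n` and every grid point `x_l^k` of `Γ_k ∪ {x_0^k, x_{N_k+1}^k}`:
`P(X̂ᵏ = x_l^k) = Σ_{j=0}^{N_{k−1}+1} [(1 − p_k) λ_l^k(x_j^{k−1}) + p_k λ_l^k(x_j^{k−1}+α_k)]
  · P(X̂ᵏ⁻¹ = x_j^{k−1})`,
where `λ_l^k(ξ) := P(J_{Γ_k}(ξ, Λ_k) = x_l^k)`.  (The first conjunct treats the initial step
`k = 1`, for which `X̂⁰ = 0` is deterministic; the second conjunct treats steps `k ≥ 2`.) -/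
theorem dualQ_weights_recursion {Ω : Type*} [MeasurableSpace Ω] (P : Measure Ω)
    [IsProbabilityMeasure P]
    (n : ℕ) (hn : 1 ≤ n) (α p : ℕ → ℝ)
    (hα : ∀ i < n, 0 < α i) (hp : ∀ i < n, p i ∈ Set.Ioo (0 : ℝ) 1)
    (Z Λ : ℕ → Ω → ℝ)
    (hZmeas : ∀ i, Measurable (Z i)) (hΛmeas : ∀ i, Measurable (Λ i))
    (hZ01 : ∀ i < n, ∀ ω, Z i ω = 0 ∨ Z i ω = 1)
    (hZp : ∀ i < n, P {ω | Z i ω = 1} = ENNReal.ofReal (p i))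
    (hΛunif : ∀ i < n, Measure.map (Λ i) P = volume.restrict (Set.Icc (0 : ℝ) 1))
    (hindep : iIndepFun (m := fun _ : ℕ ⊕ ℕ => (inferInstance : MeasurableSpace ℝ))
      (Sum.elim Z Λ) P)
    -- the grids, with pairwise distinct points:
    -- `x k 0 = 0 < x k 1 < … < x k (Nk k) < x k (Nk k + 1) = Σ_{i ≤ k} αᵢ`
    (Nk : ℕ → ℕ) (x : ℕ → ℕ → ℝ)
    (hmono : ∀ k < n, ∀ j ≤ Nk k, x k j < x k (j + 1))
    (hx0 : ∀ k < n, x k 0 = 0)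
    (hxN : ∀ k < n, x k (Nk k + 1) = ∑ i ∈ Finset.range (k + 1), α i) :
    -- initial step: `X̂¹ = J_{Γ₀}(0 + α₀ Z₀, Λ₀)` with `X̂⁰ = 0`
    (∀ l ≤ Nk 0 + 1,
      (P {ω | XhatScheme Nk x α Z Λ 1 ω = x 0 l}).toReal =
        (1 - p 0) * (P {ω | dualQ (Nk 0) (x 0) 0 (Λ 0 ω) = x 0 l}).toReal +
          p 0 * (P {ω | dualQ (Nk 0) (x 0) (α 0) (Λ 0 ω) = x 0 l}).toReal) ∧
    -- general step
    (∀ k, 0 < k → k < n → ∀ l ≤ Nk k + 1,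
      (P {ω | XhatScheme Nk x α Z Λ (k + 1) ω = x k l}).toReal =
        ∑ j ∈ Finset.range (Nk (k - 1) + 2),
          ((1 - p k) * (P {ω | dualQ (Nk k) (x k) (x (k - 1) j) (Λ k ω) = x k l}).toReal +
            p k * (P {ω | dualQ (Nk k) (x k) (x (k - 1) j + α k) (Λ k ω) = x k l}).toReal) *
          (P {ω | XhatScheme Nk x α Z Λ k ω = x (k - 1) j}).toReal) := by
  classical
  -- key single-step identity
  have key : ∀ k, k < n → ∀ c v : ℝ,
      P {ω | dualQ (Nk k) (x k) (c + α k * Z k ω) (Λ k ω) = v} =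
        (1 - ENNReal.ofReal (p k)) * P {ω | dualQ (Nk k) (x k) c (Λ k ω) = v} +
          ENNReal.ofReal (p k) * P {ω | dualQ (Nk k) (x k) (c + α k) (Λ k ω) = v} := by
    intro k hk c v
    have hZΛ : IndepFun (Z k) (Λ k) P :=
      hindep.indepFun (show (Sum.inl k : ℕ ⊕ ℕ) ≠ Sum.inr k by simp)
    have hE0 : MeasurableSet (dualQ (Nk k) (x k) c ⁻¹' {v}) :=
      measurable_dualQ_right _ _ _ (measurableSet_singleton v)
    have hE1 : MeasurableSet (dualQ (Nk k) (x k) (c + α k) ⁻¹' {v}) :=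
      measurable_dualQ_right _ _ _ (measurableSet_singleton v)
    have hsplit : {ω | dualQ (Nk k) (x k) (c + α k * Z k ω) (Λ k ω) = v} =
        (Z k ⁻¹' {0} ∩ Λ k ⁻¹' (dualQ (Nk k) (x k) c ⁻¹' {v})) ∪
        (Z k ⁻¹' {1} ∩ Λ k ⁻¹' (dualQ (Nk k) (x k) (c + α k) ⁻¹' {v})) := by
      ext ω
      rcases hZ01 k hk ω with h0 | h1
      · simp [Set.mem_preimage, Set.mem_setOf_eq, h0]
      · simp [Set.mem_preimage, Set.mem_setOf_eq, h1]
    have hdisj : Disjoint (Z k ⁻¹' {0} ∩ Λ k ⁻¹' (dualQ (Nk k) (x k) c ⁻¹' {v}))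
        (Z k ⁻¹' {1} ∩ Λ k ⁻¹' (dualQ (Nk k) (x k) (c + α k) ⁻¹' {v})) := by
      apply Set.disjoint_left.mpr
      rintro ω ⟨h0, -⟩ ⟨h1, -⟩
      simp only [Set.mem_preimage, Set.mem_singleton_iff] at h0 h1
      rw [h0] at h1
      exact zero_ne_one h1
    have hz1 : P (Z k ⁻¹' {1}) = ENNReal.ofReal (p k) := hZp k hk
    have hz0 : P (Z k ⁻¹' {0}) = 1 - ENNReal.ofReal (p k) := by
      have hc : Z k ⁻¹' {0} = (Z k ⁻¹' {1})ᶜ := by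
        ext ω
        rcases hZ01 k hk ω with h | h <;> simp [h]
      rw [hc, measure_compl (hZmeas k (measurableSet_singleton 1)) (measure_ne_top _ _),
        measure_univ, hz1]
    rw [hsplit, measure_union hdisj
        ((hZmeas k (measurableSet_singleton 1)).inter (hΛmeas k hE1)),
      hZΛ.measure_inter_preimage_eq_mul _ _ (measurableSet_singleton 0) hE0,
      hZΛ.measure_inter_preimage_eq_mul _ _ (measurableSet_singleton 1) hE1,
      hz0, hz1]
    rfl
  constructor
  · -- initial step
    intro l hl
    have hseteq : {ω | XhatScheme Nk x α Z Λ 1 ω = x 0 l} =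
        {ω | dualQ (Nk 0) (x 0) (0 + α 0 * Z 0 ω) (Λ 0 ω) = x 0 l} := rfl
    rw [hseteq, key 0 hn 0 (x 0 l), zero_add]
    exact toReal_comb _ _ _ (hp 0 hn).1.le (hp 0 hn).2.le (measure_ne_top _ _) (measure_ne_top _ _)
  · -- general step
    intro k hk0 hkn l hl
    obtain ⟨m, rfl⟩ : ∃ m, k = m + 1 := ⟨k - 1, by omega⟩
    simp only [Nat.add_sub_cancel]
    have hmn : m < n := by omega
    have hgridm : ∀ i ≤ Nk m, x m i < x m (i + 1) := hmono m hmn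
    have hgrids : ∀ j < m + 1, ∀ i ≤ Nk j, x j i < x j (i + 1) := fun j hj => hmono j (by omega)
    have hXmeas : Measurable (XhatScheme Nk x α Z Λ (m + 1)) :=
      measurable_Xhat Nk x α Z Λ hZmeas hΛmeas (m + 1) hgrids
    set v := x (m + 1) l with hv
    set A : ℕ → Set Ω := fun j => {ω | XhatScheme Nk x α Z Λ (m + 1) ω = x m j} with hA
    set C : ℕ → Set Ω := fun j =>
      {ω | dualQ (Nk (m + 1)) (x (m + 1)) (x m j + α (m + 1) * Z (m + 1) ω) (Λ (m + 1) ω) = v}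
      with hC
    have hmemA : ∀ ω, ∃ j < Nk m + 2, ω ∈ A j := by
      intro ω
      obtain ⟨j, hj, hje⟩ :=
        dualQ_mem hgridm (XhatScheme Nk x α Z Λ m ω + α m * Z m ω) (Λ m ω)
      exact ⟨j, hj, hje⟩
    have hcover : {ω | XhatScheme Nk x α Z Λ (m + 1 + 1) ω = v} =
        ⋃ j ∈ Finset.range (Nk m + 2), A j ∩ C j := by
      ext ω
      simp only [Set.mem_setOf_eq, Set.mem_iUnion, Finset.mem_range, exists_prop]
      have hrec : XhatScheme Nk x α Z Λ (m + 1 + 1) ω =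
          dualQ (Nk (m + 1)) (x (m + 1))
            (XhatScheme Nk x α Z Λ (m + 1) ω + α (m + 1) * Z (m + 1) ω) (Λ (m + 1) ω) := rfl
      constructor
      · intro hω
        obtain ⟨j, hj, hjA⟩ := hmemA ω
        have hjA' : XhatScheme Nk x α Z Λ (m + 1) ω = x m j := hjA
        refine ⟨j, hj, hjA, ?_⟩
        show dualQ (Nk (m + 1)) (x (m + 1)) (x m j + α (m + 1) * Z (m + 1) ω) (Λ (m + 1) ω) = v
        rw [← hjA']
        rw [hrec] at hω
        exact hω
      · rintro ⟨j, hj, hjA, hjC⟩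
        have hjA' : XhatScheme Nk x α Z Λ (m + 1) ω = x m j := hjA
        have hjC' : dualQ (Nk (m + 1)) (x (m + 1))
            (x m j + α (m + 1) * Z (m + 1) ω) (Λ (m + 1) ω) = v := hjC
        rw [hrec, hjA']
        exact hjC'
    have hdisjA : (↑(Finset.range (Nk m + 2)) : Set ℕ).PairwiseDisjoint
        (fun j => A j ∩ C j) := by
      intro i hi j hj hij
      simp only [Finset.coe_range, Set.mem_Iio] at hi hj
      apply Set.disjoint_left.mpr
      rintro ω ⟨hiA, -⟩ ⟨hjA, -⟩
      have hiA' : XhatScheme Nk x α Z Λ (m + 1) ω = x m i := hiA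
      have hjA' : XhatScheme Nk x α Z Λ (m + 1) ω = x m j := hjA
      have hxe : x m i = x m j := hiA'.symm.trans hjA'
      rcases lt_or_gt_of_ne hij with h | h
      · exact absurd hxe (ne_of_lt (grid_strict hgridm h (by omega)))
      · exact absurd hxe.symm (ne_of_lt (grid_strict hgridm h (by omega)))
    have hCmeas : ∀ j : ℕ, MeasurableSet (C j) := by
      intro j
      have hCj : C j = (fun ω => (x m j + α (m + 1) * Z (m + 1) ω, Λ (m + 1) ω)) ⁻¹'
          ((fun q : ℝ × ℝ => dualQ (Nk (m + 1)) (x (m + 1)) q.1 q.2) ⁻¹' {v}) := rfl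
      rw [hCj]
      exact ((measurable_const.add (measurable_const.mul (hZmeas (m + 1)))).prodMk
        (hΛmeas (m + 1)))
        ((measurable_dualQ (hmono (m + 1) hkn)) (measurableSet_singleton v))
    have hACmeas : ∀ j ∈ Finset.range (Nk m + 2), MeasurableSet (A j ∩ C j) := fun j _ =>
      (hXmeas (measurableSet_singleton (x m j))).inter (hCmeas j)
    have HI := indep_Xhat_pair P Nk x α Z Λ hZmeas hΛmeas hindep (m + 1) hgrids
    have hterm : ∀ j ∈ Finset.range (Nk m + 2), P (A j ∩ C j) =
        ((1 - ENNReal.ofReal (p (m + 1))) *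
            P {ω | dualQ (Nk (m + 1)) (x (m + 1)) (x m j) (Λ (m + 1) ω) = v} +
          ENNReal.ofReal (p (m + 1)) *
            P {ω | dualQ (Nk (m + 1)) (x (m + 1)) (x m j + α (m + 1)) (Λ (m + 1) ω) = v}) *
          P (A j) := by
      intro j hj
      set B : Set (ℝ × ℝ) :=
        ({0} ×ˢ (dualQ (Nk (m + 1)) (x (m + 1)) (x m j) ⁻¹' {v})) ∪
        ({1} ×ˢ (dualQ (Nk (m + 1)) (x (m + 1)) (x m j + α (m + 1)) ⁻¹' {v})) with hB
      have hBmeas : MeasurableSet B := by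
        refine MeasurableSet.union ?_ ?_
        · exact (measurableSet_singleton 0).prod
            (measurable_dualQ_right _ _ _ (measurableSet_singleton v))
        · exact (measurableSet_singleton 1).prod
            (measurable_dualQ_right _ _ _ (measurableSet_singleton v))
      have hCeq : C j = (fun ω => (Z (m + 1) ω, Λ (m + 1) ω)) ⁻¹' B := by
        ext ω
        rcases hZ01 (m + 1) hkn ω with h0 | h1
        · simp [hC, hB, h0, Set.mem_prod]
        · simp [hC, hB, h1, Set.mem_prod]
      have hmul := HI.measure_inter_preimage_eq_mul _ _ (measurableSet_singleton (x m j)) hBmeas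
      have hPB : P ((fun ω => (Z (m + 1) ω, Λ (m + 1) ω)) ⁻¹' B) =
          (1 - ENNReal.ofReal (p (m + 1))) *
              P {ω | dualQ (Nk (m + 1)) (x (m + 1)) (x m j) (Λ (m + 1) ω) = v} +
            ENNReal.ofReal (p (m + 1)) *
              P {ω | dualQ (Nk (m + 1)) (x (m + 1)) (x m j + α (m + 1)) (Λ (m + 1) ω) = v} := by
        rw [← hCeq]
        exact key (m + 1) hkn (x m j) v
      calc P (A j ∩ C j)
          = P (XhatScheme Nk x α Z Λ (m + 1) ⁻¹' {x m j} ∩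
              (fun ω => (Z (m + 1) ω, Λ (m + 1) ω)) ⁻¹' B) := by rw [← hCeq]; rfl
        _ = P (XhatScheme Nk x α Z Λ (m + 1) ⁻¹' {x m j}) *
              P ((fun ω => (Z (m + 1) ω, Λ (m + 1) ω)) ⁻¹' B) := hmul
        _ = _ := by rw [hPB, mul_comm]; rfl
    rw [hcover, measure_biUnion_finset hdisjA hACmeas,
      ENNReal.toReal_sum (fun j _ => measure_ne_top _ _)]
    refine Finset.sum_congr rfl fun j hj => ?_
    rw [hterm j hj, ENNReal.toReal_mul,
      toReal_comb _ _ _ (hp (m + 1) hkn).1.le (hp (m + 1) hkn).2.le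
        (measure_ne_top _ _) (measure_ne_top _ _)]
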